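/- For an annulus crossing estimate in the plane: if γ is a piecewise C¹ curve in ℂ that crosses the annulus {z : r < |z−z₀| < R} (i.e., it intersects both the closed disk of radius r and the complement of the open disk of radius R around z₀), then ∫_γ |dz|/|z−z₀| ≥ log(R/r). -/

import Mathlib

open Set MeasureTheory

lemma ftc_ineq (g g' φ : ℝ → ℝ) (s : Finset ℝ) :
    ∀ c d : ℝ, c ≤ d → ContinuousOn g (Set.Icc c d) →
    (∀ x ∈ Set.Ioo c d \ (s : Set ℝ), HasDerivAt g (g' x) x) →
    MeasureTheory.IntegrableOn φ (Set.Icc c d) →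
    (∀ x ∈ Set.Ioo c d \ (s : Set ℝ), g' x ≤ φ x) →
    g d - g c ≤ ∫ y in c..d, φ y := by
  classical
  induction s using Finset.induction_on with
  | empty =>
    intro c d hcd hcont hderiv hφ hle
    exact intervalIntegral.sub_le_integral_of_hasDeriv_right_of_le hcd hcont
      (fun x hx => (hderiv x ⟨hx, by simp⟩).hasDerivWithinAt)
      hφ (fun x hx => hle x ⟨hx, by simp⟩)
  | @insert x s' hxs ih =>
    intro c d hcd hcont hderiv hφ hle
    by_cases hmem : x ∈ Set.Ioo c d
    · have hsub1 : Set.Ioo c x \ (s' : Set ℝ) ⊆ Set.Ioo c d \ ((insert x s' : Finset ℝ) : Set ℝ) := by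
        intro t ht
        refine ⟨⟨ht.1.1, ht.1.2.trans hmem.2⟩, ?_⟩
        simp only [Finset.coe_insert, Set.mem_insert_iff, not_or]
        exact ⟨ht.1.2.ne, ht.2⟩
      have hsub2 : Set.Ioo x d \ (s' : Set ℝ) ⊆ Set.Ioo c d \ ((insert x s' : Finset ℝ) : Set ℝ) := by
        intro t ht
        refine ⟨⟨hmem.1.trans ht.1.1, ht.1.2⟩, ?_⟩
        simp only [Finset.coe_insert, Set.mem_insert_iff, not_or]
        exact ⟨ht.1.1.ne', ht.2⟩
      have h1 := ih c x hmem.1.le (hcont.mono (Icc_subset_Icc le_rfl hmem.2.le))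
        (fun t ht => hderiv t (hsub1 ht)) (hφ.mono_set (Icc_subset_Icc le_rfl hmem.2.le))
        (fun t ht => hle t (hsub1 ht))
      have h2 := ih x d hmem.2.le (hcont.mono (Icc_subset_Icc hmem.1.le le_rfl))
        (fun t ht => hderiv t (hsub2 ht)) (hφ.mono_set (Icc_subset_Icc hmem.1.le le_rfl))
        (fun t ht => hle t (hsub2 ht))
      have hi1 : IntervalIntegrable φ volume c x :=
        (intervalIntegrable_iff_integrableOn_Icc_of_le hmem.1.le).mpr
          (hφ.mono_set (Icc_subset_Icc le_rfl hmem.2.le))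
      have hi2 : IntervalIntegrable φ volume x d :=
        (intervalIntegrable_iff_integrableOn_Icc_of_le hmem.2.le).mpr
          (hφ.mono_set (Icc_subset_Icc hmem.1.le le_rfl))
      have := intervalIntegral.integral_add_adjacent_intervals hi1 hi2
      linarith
    · have hsub : Set.Ioo c d \ (s' : Set ℝ) ⊆ Set.Ioo c d \ ((insert x s' : Finset ℝ) : Set ℝ) := by
        intro t ht
        refine ⟨ht.1, ?_⟩
        simp only [Finset.coe_insert, Set.mem_insert_iff, not_or]
        exact ⟨fun h => hmem (h ▸ ht.1), ht.2⟩
      exact ih c d hcd hcont (fun t ht => hderiv t (hsub ht)) hφ (fun t ht => hle t (hsub ht))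


lemma crossB (z₀ : ℂ) (r R : ℝ) (hr : 0 < r) (hrR : r < R)
    (c d : ℝ) (hcd : c ≤ d)
    (γ γ' : ℝ → ℂ) (s : Finset ℝ)
    (hcont : ContinuousOn γ (Set.Icc c d))
    (hderiv : ∀ t ∈ Set.Icc c d \ (s : Set ℝ), HasDerivAt γ (γ' t) t)
    (hint : IntervalIntegrable (fun t => ‖γ' t‖ / ‖γ t - z₀‖) MeasureTheory.volume c d)
    (h₁ : ‖γ c - z₀‖ ≤ r) (h₂ : R ≤ ‖γ d - z₀‖) :
    Real.log (R / r) ≤ ∫ t in c..d, ‖γ' t‖ / ‖γ t - z₀‖ := by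
  set h : ℝ → ℝ := fun t => ‖γ t - z₀‖ with hh_def
  have hh : ContinuousOn h (Set.Icc c d) := (hcont.sub continuousOn_const).norm
  set S : Set ℝ := Set.Icc c d ∩ h ⁻¹' Set.Iic r with hS_def
  have Sclosed : IsClosed S := hh.preimage_isClosed_of_isClosed isClosed_Icc isClosed_Iic
  have Sne : S.Nonempty := ⟨c, ⟨le_rfl, hcd⟩, h₁⟩
  have Sbdd : BddAbove S := ⟨d, fun t ht => ht.1.2⟩
  set c' : ℝ := sSup S with hc'_def
  have hc'S : c' ∈ S := Sclosed.csSup_mem Sne Sbdd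
  have hcc' : c ≤ c' := hc'S.1.1
  have hc'd : c' ≤ d := hc'S.1.2
  have hrc' : h c' ≤ r := hc'S.2
  have hc'lt : c' < d := by
    rcases hc'd.eq_or_lt with h' | h'
    · exact absurd (h' ▸ hrc') (not_le.mpr (hrR.trans_le h₂))
    · exact h'
  have key : ∀ t ∈ Set.Ioc c' d, r < h t := by
    intro t ht
    by_contra hle
    exact ht.1.not_ge (le_csSup Sbdd ⟨⟨hcc'.trans ht.1.le, ht.2⟩, not_lt.mp hle⟩)
  have hrc'' : r ≤ h c' := by
    have htend : ContinuousWithinAt h (Set.Ioc c' d) c' :=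
      (hh c' ⟨hcc', hc'd⟩).mono (fun t ht => ⟨hcc'.trans ht.1.le, ht.2⟩)
    haveI := left_nhdsWithin_Ioc_neBot hc'lt
    exact ge_of_tendsto htend (eventually_mem_nhdsWithin.mono fun t ht => (key t ht).le)
  have hpos : ∀ t ∈ Set.Icc c' d, 0 < h t := by
    intro t ht
    rcases ht.1.eq_or_lt with h' | h'
    · exact h' ▸ hr.trans_le hrc''
    · exact hr.trans (key t ⟨h', ht.2⟩)
  -- the logarithmic potential
  set g : ℝ → ℝ := fun t => Real.log (Complex.normSq (γ t - z₀)) / 2 with hg_def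
  set G' : ℝ → ℝ := fun t =>
    ((γ' t).re * (γ t - z₀).re + (γ t - z₀).re * (γ' t).re +
      ((γ' t).im * (γ t - z₀).im + (γ t - z₀).im * (γ' t).im)) /
      Complex.normSq (γ t - z₀) / 2 with hG'_def
  have hNeq : ∀ t, Complex.normSq (γ t - z₀) = h t ^ 2 := by
    intro t
    rw [hh_def]
    simp [Complex.normSq_eq_norm_sq]
  have hN0 : ∀ t ∈ Set.Icc c' d, Complex.normSq (γ t - z₀) ≠ 0 := fun t ht => by
    rw [hNeq t]; exact pow_ne_zero 2 (hpos t ht).ne'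
  have hIccsub : Set.Icc c' d ⊆ Set.Icc c d := Set.Icc_subset_Icc hcc' le_rfl
  have gcont : ContinuousOn g (Set.Icc c' d) := by
    apply ContinuousOn.div_const
    apply ContinuousOn.log
    · exact Complex.continuous_normSq.comp_continuousOn
        ((hcont.mono hIccsub).sub continuousOn_const)
    · exact hN0
  have gderiv : ∀ t ∈ Set.Ioo c' d \ (s : Set ℝ), HasDerivAt g (G' t) t := by
    intro t ht
    have htmem : t ∈ Set.Icc c' d := Set.Ioo_subset_Icc_self ht.1
    have hw : HasDerivAt (fun u => γ u - z₀) (γ' t) t :=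
      (hderiv t ⟨hIccsub htmem, ht.2⟩).sub_const z₀
    have hre : HasDerivAt (fun u => (γ u - z₀).re) ((γ' t).re) t := by
      have := Complex.reCLM.hasFDerivAt.comp_hasDerivAt t hw
      simpa [Function.comp_def] using this
    have him : HasDerivAt (fun u => (γ u - z₀).im) ((γ' t).im) t := by
      have := Complex.imCLM.hasFDerivAt.comp_hasDerivAt t hw
      simpa [Function.comp_def] using this
    have hN : HasDerivAt (fun u => Complex.normSq (γ u - z₀))
        ((γ' t).re * (γ t - z₀).re + (γ t - z₀).re * (γ' t).re +
          ((γ' t).im * (γ t - z₀).im + (γ t - z₀).im * (γ' t).im)) t := by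
      have := (hre.mul hre).add (him.mul him)
      simpa [Complex.normSq_apply, Pi.mul_def, Pi.add_def] using this
    exact (hN.log (hN0 t htmem)).div_const 2
  have hGle : ∀ t ∈ Set.Ioo c' d \ (s : Set ℝ), G' t ≤ ‖γ' t‖ / ‖γ t - z₀‖ := by
    intro t ht
    have htmem : t ∈ Set.Icc c' d := Set.Ioo_subset_Icc_self ht.1
    have hpt : 0 < h t := hpos t htmem
    have hnum : (γ' t).re * (γ t - z₀).re + (γ t - z₀).re * (γ' t).re +
        ((γ' t).im * (γ t - z₀).im + (γ t - z₀).im * (γ' t).im)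
        = 2 * ((starRingEnd ℂ) (γ t - z₀) * γ' t).re := by
      simp [Complex.mul_re, Complex.conj_re, Complex.conj_im]; ring
    have hb : ((starRingEnd ℂ) (γ t - z₀) * γ' t).re ≤ h t * ‖γ' t‖ := by
      calc ((starRingEnd ℂ) (γ t - z₀) * γ' t).re
          ≤ ‖(starRingEnd ℂ) (γ t - z₀) * γ' t‖ := Complex.re_le_norm _
        _ = h t * ‖γ' t‖ := by rw [norm_mul, Complex.norm_conj]
    rw [hG'_def]
    simp only
    rw [hnum, hNeq t]
    have hre : 2 * ((starRingEnd ℂ) (γ t - z₀) * γ' t).re / h t ^ 2 / 2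
        = ((starRingEnd ℂ) (γ t - z₀) * γ' t).re / h t ^ 2 := by ring
    rw [hre, div_le_div_iff₀ (pow_pos hpt 2) hpt]
    nlinarith [mul_le_mul_of_nonneg_right hb hpt.le, sq_nonneg (h t)]
  have φint : MeasureTheory.IntegrableOn (fun t => ‖γ' t‖ / ‖γ t - z₀‖) (Set.Icc c' d) := by
    rw [← intervalIntegrable_iff_integrableOn_Icc_of_le hc'd]
    exact hint.mono_set (by rw [Set.uIcc_of_le hc'd, Set.uIcc_of_le hcd]; exact hIccsub)
  have main := ftc_ineq g G' (fun t => ‖γ' t‖ / ‖γ t - z₀‖) s c' d hc'd gcont gderiv φint hGle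
  have hgd : g d = Real.log (h d) := by
    rw [hg_def]; simp only; rw [hNeq d, Real.log_pow]; push_cast; ring
  have hgc' : g c' = Real.log (h c') := by
    rw [hg_def]; simp only; rw [hNeq c', Real.log_pow]; push_cast; ring
  have hlow : Real.log (R / r) ≤ g d - g c' := by
    rw [hgd, hgc', Real.log_div (hr.trans hrR).ne' hr.ne']
    have l1 : Real.log R ≤ Real.log (h d) := Real.log_le_log (hr.trans hrR) h₂
    have l2 : Real.log (h c') ≤ Real.log r := Real.log_le_log (hpos c' ⟨le_rfl, hc'd⟩) hrc'
    linarith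
  have hmono : (∫ t in c'..d, ‖γ' t‖ / ‖γ t - z₀‖) ≤ ∫ t in c..d, ‖γ' t‖ / ‖γ t - z₀‖ := by
    apply intervalIntegral.integral_mono_interval hcc' hc'd le_rfl
    · filter_upwards with t using by positivity
    · exact hint
  linarith

/-- Annulus crossing estimate: if a piecewise `C¹` curve `γ : [a,b] → ℂ`
(continuous, differentiable off a finite set, with integrable weighted speed)
crosses the annulus `{z : r < |z - z₀| < R}`, i.e. it passes through a point at
distance `≤ r` and a point at distance `≥ R` from `z₀`, then
`∫ |dz|/|z - z₀| ≥ log (R/r)`. -/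
theorem stmt_14 (z₀ : ℂ) (r R : ℝ) (hr : 0 < r) (hrR : r < R)
    (a b : ℝ) (hab : a ≤ b)
    (γ γ' : ℝ → ℂ) (s : Finset ℝ)
    (hcont : ContinuousOn γ (Set.Icc a b))
    (hderiv : ∀ t ∈ Set.Icc a b \ (s : Set ℝ), HasDerivAt γ (γ' t) t)
    (hint : IntervalIntegrable (fun t => ‖γ' t‖ / ‖γ t - z₀‖) MeasureTheory.volume a b)
    (t₁ : ℝ) (ht₁ : t₁ ∈ Set.Icc a b) (h₁ : ‖γ t₁ - z₀‖ ≤ r)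
    (t₂ : ℝ) (ht₂ : t₂ ∈ Set.Icc a b) (h₂ : R ≤ ‖γ t₂ - z₀‖) :
    Real.log (R / r) ≤ ∫ t in a..b, ‖γ' t‖ / ‖γ t - z₀‖ := by
  rcases le_or_gt t₁ t₂ with hle | hlt
  · have hsub : Set.Icc t₁ t₂ ⊆ Set.Icc a b := Set.Icc_subset_Icc ht₁.1 ht₂.2
    have hint12 : IntervalIntegrable (fun t => ‖γ' t‖ / ‖γ t - z₀‖) MeasureTheory.volume t₁ t₂ :=
      hint.mono_set (by rw [Set.uIcc_of_le hle, Set.uIcc_of_le hab]; exact hsub)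
    have key := crossB z₀ r R hr hrR t₁ t₂ hle γ γ' s (hcont.mono hsub)
      (fun t ht => hderiv t ⟨hsub ht.1, ht.2⟩) hint12 h₁ h₂
    refine key.trans (intervalIntegral.integral_mono_interval ht₁.1 hle ht₂.2 ?_ hint)
    filter_upwards with t using by positivity
  · have hle : t₂ ≤ t₁ := hlt.le
    have hsub : Set.Icc t₂ t₁ ⊆ Set.Icc a b := Set.Icc_subset_Icc ht₂.1 ht₁.2
    set δ : ℝ → ℂ := fun u => γ (t₁ + t₂ - u) with hδ_def
    set δ' : ℝ → ℂ := fun u => -γ' (t₁ + t₂ - u) with hδ'_def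
    have hmap : ∀ u ∈ Set.Icc t₂ t₁, t₁ + t₂ - u ∈ Set.Icc t₂ t₁ := by
      intro u hu
      constructor <;> [linarith [hu.2]; linarith [hu.1]]
    have hcontδ : ContinuousOn δ (Set.Icc t₂ t₁) :=
      (hcont.mono hsub).comp (continuous_const.sub continuous_id).continuousOn
        (fun u hu => hmap u hu)
    have hderivδ : ∀ u ∈ Set.Icc t₂ t₁ \ ((s.image fun x => t₁ + t₂ - x : Finset ℝ) : Set ℝ),
        HasDerivAt δ (δ' u) u := by
      intro u hu
      have hv : t₁ + t₂ - u ∈ Set.Icc a b := hsub (hmap u hu.1)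
      have hvs : t₁ + t₂ - u ∉ (s : Set ℝ) := by
        intro hmem
        exact hu.2 (by
          simp only [Finset.coe_image, Set.mem_image]
          exact ⟨t₁ + t₂ - u, hmem, by ring⟩)
      have hγv := hderiv (t₁ + t₂ - u) ⟨hv, hvs⟩
      have hinner : HasDerivAt (fun u : ℝ => t₁ + t₂ - u) (-1) u := by
        simpa using (hasDerivAt_id u).const_sub (t₁ + t₂)
      have := HasDerivAt.scomp u hγv hinner
      simpa [hδ_def, hδ'_def, Function.comp_def] using this
    have hintδ : IntervalIntegrable (fun u => ‖δ' u‖ / ‖δ u - z₀‖) MeasureTheory.volume t₂ t₁ := by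
      have hint12 : IntervalIntegrable (fun t => ‖γ' t‖ / ‖γ t - z₀‖) MeasureTheory.volume t₂ t₁ :=
        hint.mono_set (by rw [Set.uIcc_of_le hle, Set.uIcc_of_le hab]; exact hsub)
      have := hint12.comp_sub_left (t₁ + t₂)
      have heq : (fun u => ‖δ' u‖ / ‖δ u - z₀‖)
          = fun u => ‖γ' (t₁ + t₂ - u)‖ / ‖γ (t₁ + t₂ - u) - z₀‖ := by
        funext u; simp [hδ_def, hδ'_def]
      rw [heq]
      convert this.symm using 2 <;> ring
    have hδ₁ : ‖δ t₂ - z₀‖ ≤ r := by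
      rw [hδ_def]; simpa using h₁
    have hδ₂ : R ≤ ‖δ t₁ - z₀‖ := by
      rw [hδ_def]; simpa using h₂
    have key := crossB z₀ r R hr hrR t₂ t₁ hle δ δ' (s.image fun x => t₁ + t₂ - x)
      hcontδ hderivδ hintδ hδ₁ hδ₂
    have heq : (∫ u in t₂..t₁, ‖δ' u‖ / ‖δ u - z₀‖)
        = ∫ u in t₂..t₁, ‖γ' u‖ / ‖γ u - z₀‖ := by
      have h1 : (fun u => ‖δ' u‖ / ‖δ u - z₀‖)
          = fun u => ‖γ' (t₁ + t₂ - u)‖ / ‖γ (t₁ + t₂ - u) - z₀‖ := by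
        funext u; simp [hδ_def, hδ'_def]
      rw [h1]
      have := intervalIntegral.integral_comp_sub_left
        (fun u => ‖γ' u‖ / ‖γ u - z₀‖) (t₁ + t₂) (a := t₂) (b := t₁)
      convert this using 2 <;> ring
    rw [heq] at key
    refine key.trans (intervalIntegral.integral_mono_interval ht₂.1 hle ht₁.2 ?_ hint)
    filter_upwards with t using by positivity
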